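/- Let V be a nonzero normed space, X a nonzero Banach space, and E a reasonable sequence space of X-valued sequences. Let v : V → E be a nonzero continuous linear operator and suppose there exists j₀ ∈ ℕ with π_{j₀} ∘ v = 0. Then the subspace N = {u ∈ L(V, E) : π_{j₀} ∘ u = 0} consists of non-surjective operators, contains v, and has dimension at least continuum. -/

import Mathlib

/-- If v : V → E is nonzero continuous linear and some coordinate j₀ of v
vanishes identically, then N = {u ∈ L(V,E) : π_{j₀} ∘ u = 0} consists of non-surjective
operators, contains v, and has dimension at least continuum. -/
theorem stmt3 {V X E : Type*}
    [NormedAddCommGroup V] [NormedSpace ℝ V] [Nontrivial V]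
    [NormedAddCommGroup X] [NormedSpace ℝ X] [CompleteSpace X] [Nontrivial X]
    [NormedAddCommGroup E] [NormedSpace ℝ E] [CompleteSpace E]
    (coord : E →ₗ[ℝ] (ℕ → X))
    (hinj : Function.Injective coord)
    (hc00 : ∀ f : ℕ → X, (Function.support f).Finite → f ∈ Set.range coord)
    (hmul : ∀ (α : ℕ → ℝ) (C : ℝ), (∀ n, |α n| ≤ C) → ∀ x : E,
      ∃ y : E, coord y = (fun n => α n • coord x n) ∧ ‖y‖ ≤ C * ‖x‖)
    (v : V →L[ℝ] E) (hv : v ≠ 0) (j₀ : ℕ) (hj : ∀ x, coord (v x) j₀ = 0) :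
    ∃ N : Submodule ℝ (V →L[ℝ] E),
      (N : Set (V →L[ℝ] E)) = {u | ∀ x, coord (u x) j₀ = 0} ∧
      v ∈ N ∧ (∀ u ∈ N, ¬ Function.Surjective ⇑u) ∧
      Cardinal.continuum ≤ Module.rank ℝ N := by
  -- the submodule N
  set N : Submodule ℝ (V →L[ℝ] E) :=
    { carrier := {u | ∀ x, coord (u x) j₀ = 0}
      add_mem' := by
        intro a b ha hb x
        have : coord ((a + b) x) = coord (a x) + coord (b x) := by
          rw [← map_add]; rfl
        simp [this, ha x, hb x]
      zero_mem' := by intro x; simp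
      smul_mem' := by
        intro c a ha x
        have : coord ((c • a) x) = c • coord (a x) := by
          rw [← map_smul]; rfl
        simp [this, ha x] } with hN
  obtain ⟨x₀, hx₀⟩ := exists_ne (0 : X)
  refine ⟨N, rfl, hj, ?_, ?_⟩
  -- non-surjectivity
  · intro u hu hsurj
    obtain ⟨e₀, he₀⟩ := hc00 (Pi.single j₀ x₀)
      ((Set.finite_singleton j₀).subset Pi.support_single_subset)
    obtain ⟨x, hx⟩ := hsurj e₀
    have := hu x
    rw [hx, he₀] at this
    simp [Pi.single_eq_same] at this
    exact hx₀ this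
  -- the coordinate projections P k : E →L[ℝ] E
  · have Pkey : ∀ k : ℕ, ∃ P : E →L[ℝ] E, ∀ x : E,
        coord (P x) = fun n => (if n = k then (1:ℝ) else 0) • coord x n := by
      intro k
      set α : ℕ → ℝ := fun n => if n = k then (1:ℝ) else 0 with hα
      have hb : ∀ n, |α n| ≤ 1 := by intro n; dsimp [α]; split <;> simp
      have hex := fun x => hmul α 1 hb x
      set p : E → E := fun x => (hex x).choose with hp
      have hcp : ∀ x, coord (p x) = fun n => α n • coord x n := fun x => (hex x).choose_spec.1
      have hnp : ∀ x, ‖p x‖ ≤ 1 * ‖x‖ := fun x => (hex x).choose_spec.2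
      have hadd : ∀ x y, p (x + y) = p x + p y := by
        intro x y
        apply hinj
        rw [map_add, hcp, hcp, hcp]
        funext n
        simp [map_add, smul_add]
      have hsmul : ∀ (c : ℝ) x, p (c • x) = c • p x := by
        intro c x
        apply hinj
        rw [map_smul, hcp, hcp]
        funext n
        simp [map_smul, smul_comm c]
      exact ⟨LinearMap.mkContinuous ⟨⟨p, fun x y => hadd x y⟩, fun c x => hsmul c x⟩ 1 hnp, hcp⟩
    choose P hP using Pkey
    -- basic finitely-supported vectors
    have ekey : ∀ n : ℕ, ∃ e : E, coord e = Pi.single (j₀ + n + 1) x₀ := by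
      intro n
      exact hc00 _ ((Set.finite_singleton (j₀ + n + 1)).subset Pi.support_single_subset)
    choose e he using ekey
    have hene : ∀ n, e n ≠ 0 := by
      intro n h
      have := congrFun (he n) (j₀ + n + 1)
      rw [h, map_zero] at this
      simp [Pi.single_eq_same] at this
      exact hx₀ this.symm
    set eb : ℕ → E := fun n => ‖e n‖⁻¹ • e n with heb
    have hebnorm : ∀ n, ‖eb n‖ = 1 := by
      intro n; rw [heb]; simp [norm_smul, abs_of_nonneg, inv_mul_cancel₀ (norm_ne_zero_iff.2 (hene n))]
    have hco : ∀ n l, coord (e n) l = if l = j₀ + n + 1 then x₀ else 0 := by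
      intro n l
      rw [he n]
      by_cases h : l = j₀ + n + 1
      · rw [if_pos h, h]
        exact Pi.single_eq_same (M := fun _ => X) _ _
      · rw [if_neg h]
        exact Pi.single_eq_of_ne (M := fun _ => X) h x₀
    have hcebl : ∀ n l, coord (eb n) l = ‖e n‖⁻¹ • coord (e n) l := by
      intro n l
      have h1 : coord (eb n) = ‖e n‖⁻¹ • coord (e n) := map_smul coord _ _
      rw [h1]
      rfl
    have hebne : ∀ n, eb n ≠ 0 := by
      intro n h
      have := hebnorm n
      rw [h, norm_zero] at this
      norm_num at this
    -- action of the projections on eb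
    have hPj₀eb : ∀ n, P j₀ (eb n) = 0 := by
      intro n
      apply hinj
      rw [map_zero]
      funext m
      simp only [hP, Pi.zero_apply, hcebl, hco]
      by_cases hm : m = j₀
      · rw [if_neg (show ¬ m = j₀ + n + 1 by omega), smul_zero, smul_zero]
      · rw [if_neg hm, zero_smul]
    have hPseb : ∀ m n, P (j₀ + m + 1) (eb n) = if n = m then eb n else 0 := by
      intro m n
      by_cases hnm : n = m
      · rw [if_pos hnm, ← hnm]
        apply hinj
        funext l
        simp only [hP, hcebl, hco]
        by_cases hl : l = j₀ + n + 1
        · rw [if_pos hl, one_smul]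
        · rw [if_neg hl, zero_smul, if_neg hl, smul_zero]
      · rw [if_neg hnm]
        apply hinj
        rw [map_zero]
        funext l
        simp only [hP, Pi.zero_apply, hcebl, hco]
        by_cases hl : l = j₀ + m + 1
        · rw [if_neg (show ¬ l = j₀ + n + 1 by omega), smul_zero, smul_zero]
        · rw [if_neg hl, zero_smul]
    -- the vectors g t for t ∈ (0,1)
    have gsum : ∀ t : Set.Ioo (0:ℝ) 1, Summable (fun n : ℕ => (t:ℝ)^n • eb n) := by
      intro t
      apply Summable.of_norm
      have : ∀ n : ℕ, ‖(t:ℝ)^n • eb n‖ = (t:ℝ)^n := by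
        intro n
        rw [norm_smul, hebnorm n, mul_one, norm_pow, Real.norm_eq_abs,
          abs_of_pos t.2.1]
      simp only [this]
      exact summable_geometric_of_lt_one t.2.1.le t.2.2
    set g : Set.Ioo (0:ℝ) 1 → E := fun t => ∑' n, (t:ℝ)^n • eb n with hg
    have hPg : ∀ (t : Set.Ioo (0:ℝ) 1) (m : ℕ), P (j₀ + m + 1) (g t) = (t:ℝ)^m • eb m := by
      intro t m
      rw [hg]
      rw [ContinuousLinearMap.map_tsum _ (gsum t)]
      have : ∀ n, P (j₀ + m + 1) ((t:ℝ)^n • eb n) = if n = m then (t:ℝ)^m • eb m else 0 := by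
        intro n
        rw [map_smul, hPseb]
        rcases eq_or_ne n m with rfl | h
        · simp
        · simp [h]
      simp only [this]
      exact (tsum_eq_single m (fun n h => if_neg h)).trans (if_pos rfl)
    have hgj₀ : ∀ t : Set.Ioo (0:ℝ) 1, coord (g t) j₀ = 0 := by
      intro t
      have h1 : P j₀ (g t) = 0 := by
        rw [hg, ContinuousLinearMap.map_tsum _ (gsum t)]
        have : ∀ n, P j₀ ((t:ℝ)^n • eb n) = 0 := by
          intro n; rw [map_smul, hPj₀eb, smul_zero]
        simp only [this]
        exact tsum_zero
      have h2 := congrFun (hP j₀ (g t)) j₀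
      rw [h1, map_zero] at h2
      simpa using h2.symm
    -- the functional φ
    obtain ⟨x₁, hx₁⟩ := exists_ne (0 : V)
    obtain ⟨φ, -, hφ⟩ := exists_dual_vector ℝ x₁ (norm_ne_zero_iff.2 hx₁)
    have hφx₁ : φ x₁ ≠ 0 := by rw [hφ]; exact_mod_cast norm_ne_zero_iff.2 hx₁
    -- the linear map e ↦ φ.smulRight e
    set L : E →ₗ[ℝ] (V →L[ℝ] E) :=
      { toFun := fun y => φ.smulRight y
        map_add' := by intro y z; ext x; simp [smul_add]
        map_smul' := by
          intro c y; ext x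
          simp only [ContinuousLinearMap.smulRight_apply, ContinuousLinearMap.coe_smul',
            Pi.smul_apply, RingHom.id_apply]
          exact smul_comm _ _ _ }
    have hLinj : LinearMap.ker L = ⊥ := by
      rw [LinearMap.ker_eq_bot]
      intro y z h
      have := congrFun (congrArg (fun (w : V →L[ℝ] E) => (w : V → E)) h) x₁
      change φ x₁ • y = φ x₁ • z at this
      exact smul_right_injective E hφx₁ this
    -- linear independence of g
    have hgind : LinearIndependent ℝ g := by
      rw [linearIndependent_iff']
      intro s c hsum i hi
      -- coefficients vanish on all powers
      have hpow : ∀ m : ℕ, ∑ j ∈ s, c j * (j : ℝ)^m = 0 := by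
        intro m
        have h1 := congrArg (P (j₀ + m + 1)) hsum
        rw [map_sum, map_zero] at h1
        have h2 : ∀ j ∈ s, P (j₀ + m + 1) (c j • g j) = (c j * (j:ℝ)^m) • eb m := by
          intro j _
          rw [map_smul, hPg, smul_smul]
        rw [Finset.sum_congr rfl h2, ← Finset.sum_smul] at h1
        rcases smul_eq_zero.1 h1 with h | h
        · exact h
        · exact absurd h (hebne m)
      -- Vandermonde argument
      set k := s.card with hk
      set o : Fin k → Set.Ioo (0:ℝ) 1 := fun j => (s.equivFin.symm j : Set.Ioo (0:ℝ) 1) with ho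
      have hoinj : Function.Injective o := fun a b h =>
        s.equivFin.symm.injective (Subtype.ext h)
      set w : Fin k → ℝ := fun j => (o j : ℝ) with hw
      have hwinj : Function.Injective w := fun a b h => hoinj (Subtype.ext h)
      have hvdm : (Matrix.vandermonde w).det ≠ 0 :=
        Matrix.det_vandermonde_ne_zero_iff.2 hwinj
      have hsum' : ∀ m : ℕ, ∑ j : Fin k, c (o j) * w j ^ m = 0 := by
        intro m
        have h3 : ∑ j : Fin k, c (o j) * w j ^ m = ∑ i ∈ s.attach, c i * ((i : Set.Ioo (0:ℝ) 1) : ℝ)^m :=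
          Equiv.sum_comp s.equivFin.symm
            (fun i : {x // x ∈ s} => c i * ((i : Set.Ioo (0:ℝ) 1) : ℝ)^m)
        rw [h3, Finset.sum_attach s (fun j => c j * (j : ℝ)^m), hpow m]
      have hvm : Matrix.vecMul (fun j => c (o j)) (Matrix.vandermonde w) = 0 := by
        funext m
        rw [Matrix.vecMul, dotProduct]
        simpa [Matrix.vandermonde] using hsum' m.val
      have hc0 : (fun j => c (o j)) = 0 := Matrix.eq_zero_of_vecMul_eq_zero hvdm hvm
      have hci : c (o (s.equivFin ⟨i, hi⟩)) = 0 := congrFun hc0 _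
      simp only [ho, Equiv.symm_apply_apply] at hci
      exact hci
    -- assemble: family in N
    have hmem : ∀ t : Set.Ioo (0:ℝ) 1, L (g t) ∈ N := by
      intro t x
      have : coord (φ x • g t) = φ x • coord (g t) := by rw [map_smul]
      show coord (φ x • g t) j₀ = 0
      rw [this]
      simp [hgj₀ t]
    have hind2 : LinearIndependent ℝ (fun t : Set.Ioo (0:ℝ) 1 => (⟨L (g t), hmem t⟩ : N)) := by
      apply LinearIndependent.of_comp N.subtype
      exact hgind.map' L hLinj
    have := hind2.cardinal_lift_le_rank
    rw [Cardinal.mk_Ioo_real (by norm_num : (0:ℝ) < 1)] at this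
    simpa using this
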